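/- Let g>0, θ∈ℝ, γ>1, k>0, ρ₀>0 be constants, S, Z : ℝ→ℝ C¹ functions, and I₁, I₂, h_w C¹ functions. Suppose M, A, Q : ℝ×ℝ→ℝ are C¹ with M>0, A>0, S−A>0, satisfying ∂ₜA+∂ₓQ=0 and ∂ₜQ+∂ₓ( Q²/A + g I₁ cosθ + A·M c_a²/(γ(S−A)) ) = −gA∂ₓZ + g I₂ cosθ + (M c_a²/(γ(S−A)))·∂ₓA with c_a² = kγ(ρ₀M/(S−A))^{γ−1}, together with the geometric identities ∂ₓ[I₁] = I₂ + A ∂ₓ[h_w] and ∂ₜ[A h_w − I₁] = h_w ∂ₜA. Define the water energy E_w = A u²/2 + g(A h_w − I₁)cosθ + gAZ with u=Q/A, and the water entropy flux H_w = ( E_w + g I₁ cosθ + A·M c_a²/(γ(S−A)) )·u. Then ∂ₜE_w + ∂ₓH_w = −(c_a² M/(γ(S−A)))·∂ₜA. -/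

import Mathlib

open Real MeasureTheory

/-- Partial derivative with respect to the first (time) variable. -/
noncomputable def pt (f : ℝ → ℝ → ℝ) (t x : ℝ) : ℝ := deriv (fun s => f s x) t

/-- Partial derivative with respect to the second (space) variable. -/
noncomputable def px (f : ℝ → ℝ → ℝ) (t x : ℝ) : ℝ := deriv (fun y => f t y) x

lemma slice_t_diff {f : ℝ → ℝ → ℝ} (hf : ContDiff ℝ 1 (Function.uncurry f)) (x t : ℝ) :
    DifferentiableAt ℝ (fun s => f s x) t := by
  have h : (fun s => f s x) = Function.uncurry f ∘ (fun s => (s, x)) := rfl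
  rw [h]
  exact ((hf.differentiable one_ne_zero) (t, x)).comp t
    (DifferentiableAt.prodMk differentiableAt_id (differentiableAt_const x))

lemma slice_x_diff {f : ℝ → ℝ → ℝ} (hf : ContDiff ℝ 1 (Function.uncurry f)) (t x : ℝ) :
    DifferentiableAt ℝ (fun y => f t y) x := by
  have h : (fun y => f t y) = Function.uncurry f ∘ (fun y => (t, y)) := rfl
  rw [h]
  exact ((hf.differentiable one_ne_zero) (t, x)).comp x
    (DifferentiableAt.prodMk (differentiableAt_const t) differentiableAt_id)

set_option maxHeartbeats 2000000 in
/-- for C¹ solutions of the water-layer equations (with the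
geometric identities `∂ₓ I₁ = I₂ + A ∂ₓ h_w` and `∂ₜ(A h_w - I₁) = h_w ∂ₜ A`),
the water energy `E_w = A u²/2 + g (A h_w - I₁) cos θ + g A Z` and the water
entropy flux `H_w = (E_w + g I₁ cos θ + A M c_a²/(γ(S-A))) u` satisfy
`∂ₜ E_w + ∂ₓ H_w = -(c_a² M/(γ(S-A))) ∂ₜ A`. -/
theorem water_energy_balance
    (g θ γ k ρ₀ : ℝ) (hg : 0 < g) (hγ : 1 < γ) (hk : 0 < k) (hρ₀ : 0 < ρ₀)
    (S Z : ℝ → ℝ) (hSreg : ContDiff ℝ 1 S) (hZreg : ContDiff ℝ 1 Z)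
    (I₁ I₂ hw : ℝ → ℝ → ℝ)
    (hI₁reg : ContDiff ℝ 1 (Function.uncurry I₁))
    (hI₂reg : ContDiff ℝ 1 (Function.uncurry I₂))
    (hhwreg : ContDiff ℝ 1 (Function.uncurry hw))
    (M A Q : ℝ → ℝ → ℝ)
    (hMreg : ContDiff ℝ 1 (Function.uncurry M))
    (hAreg : ContDiff ℝ 1 (Function.uncurry A))
    (hQreg : ContDiff ℝ 1 (Function.uncurry Q))
    (hMpos : ∀ t x, 0 < M t x) (hApos : ∀ t x, 0 < A t x)
    (hSA : ∀ t x, 0 < S x - A t x)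
    (ca2 : ℝ → ℝ → ℝ)
    (hca2 : ∀ t x, ca2 t x = k * γ * (ρ₀ * M t x / (S x - A t x)) ^ (γ - 1))
    (hmass : ∀ t x, pt A t x + px Q t x = 0)
    (hmom : ∀ t x,
      pt Q t x + px (fun t x => Q t x ^ 2 / A t x + g * I₁ t x * Real.cos θ
          + A t x * (M t x * ca2 t x / (γ * (S x - A t x)))) t x
        = -g * A t x * deriv Z x + g * I₂ t x * Real.cos θ
          + M t x * ca2 t x / (γ * (S x - A t x)) * px A t x)
    (hLeibnizX : ∀ t x, px I₁ t x = I₂ t x + A t x * px hw t x)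
    (hLeibnizT : ∀ t x,
      pt (fun t x => A t x * hw t x - I₁ t x) t x = hw t x * pt A t x)
    (u : ℝ → ℝ → ℝ) (hu : ∀ t x, u t x = Q t x / A t x)
    (Ew Hw : ℝ → ℝ → ℝ)
    (hEw : ∀ t x, Ew t x = A t x * u t x ^ 2 / 2
        + g * (A t x * hw t x - I₁ t x) * Real.cos θ + g * A t x * Z x)
    (hHw : ∀ t x, Hw t x = (Ew t x + g * I₁ t x * Real.cos θ
        + A t x * (M t x * ca2 t x / (γ * (S x - A t x)))) * u t x) :
    ∀ t x, pt Ew t x + px Hw t x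
      = -(ca2 t x * M t x / (γ * (S x - A t x))) * pt A t x := by
  intro t x
  -- nonvanishing facts
  have ha : A t x ≠ 0 := (hApos t x).ne'
  have hsa : S x - A t x ≠ 0 := (hSA t x).ne'
  have hγ0 : (0:ℝ) < γ := lt_trans zero_lt_one hγ
  have hγne : γ ≠ 0 := hγ0.ne'
  have hbpos : 0 < ρ₀ * M t x / (S x - A t x) :=
    div_pos (mul_pos hρ₀ (hMpos t x)) (hSA t x)
  -- basic HasDerivAt facts (time slices)
  have hA_t : HasDerivAt (fun s => A s x) (pt A t x) t := by
    unfold pt; exact (slice_t_diff hAreg x t).hasDerivAt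
  have hQ_t : HasDerivAt (fun s => Q s x) (pt Q t x) t := by
    unfold pt; exact (slice_t_diff hQreg x t).hasDerivAt
  have hI₁_t : HasDerivAt (fun s => I₁ s x) (pt I₁ t x) t := by
    unfold pt; exact (slice_t_diff hI₁reg x t).hasDerivAt
  have hhw_t : HasDerivAt (fun s => hw s x) (pt hw t x) t := by
    unfold pt; exact (slice_t_diff hhwreg x t).hasDerivAt
  -- basic HasDerivAt facts (space slices)
  have hA_x : HasDerivAt (fun y => A t y) (px A t x) x := by
    unfold px; exact (slice_x_diff hAreg t x).hasDerivAt
  have hQ_x : HasDerivAt (fun y => Q t y) (px Q t x) x := by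
    unfold px; exact (slice_x_diff hQreg t x).hasDerivAt
  have hI₁_x : HasDerivAt (fun y => I₁ t y) (px I₁ t x) x := by
    unfold px; exact (slice_x_diff hI₁reg t x).hasDerivAt
  have hhw_x : HasDerivAt (fun y => hw t y) (px hw t x) x := by
    unfold px; exact (slice_x_diff hhwreg t x).hasDerivAt
  have hSd : DifferentiableAt ℝ S x := (hSreg.differentiable one_ne_zero).differentiableAt
  have hZd : HasDerivAt Z (deriv Z x) x :=
    ((hZreg.differentiable one_ne_zero).differentiableAt).hasDerivAt
  -- differentiability of the pressure-like term P
  have hbase : DifferentiableAt ℝ (fun y => ρ₀ * M t y / (S y - A t y)) x :=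
    ((slice_x_diff hMreg t x).const_mul ρ₀).div (hSd.sub (slice_x_diff hAreg t x)) hsa
  have hc2d : DifferentiableAt ℝ
      (fun y => k * γ * (ρ₀ * M t y / (S y - A t y)) ^ (γ - 1)) x :=
    (hbase.rpow_const (Or.inl hbpos.ne')).const_mul (k * γ)
  have hPdiff : DifferentiableAt ℝ
      (fun y => M t y * (k * γ * (ρ₀ * M t y / (S y - A t y)) ^ (γ - 1))
          / (γ * (S y - A t y))) x :=
    ((slice_x_diff hMreg t x).mul hc2d).div
      ((hSd.sub (slice_x_diff hAreg t x)).const_mul γ) (mul_ne_zero hγne hsa)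
  have hP_x : HasDerivAt
      (fun y => M t y * (k * γ * (ρ₀ * M t y / (S y - A t y)) ^ (γ - 1))
          / (γ * (S y - A t y)))
      (deriv (fun y => M t y * (k * γ * (ρ₀ * M t y / (S y - A t y)) ^ (γ - 1))
          / (γ * (S y - A t y))) x) x := hPdiff.hasDerivAt
  -- Leibniz-in-time term
  have hF : HasDerivAt (fun s => A s x * hw s x - I₁ s x) (hw t x * pt A t x) t := by
    have h2 : deriv (fun s => A s x * hw s x - I₁ s x) t = hw t x * pt A t x :=
      hLeibnizT t x
    exact h2 ▸ (((hA_t.mul hhw_t).sub hI₁_t).differentiableAt.hasDerivAt)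
  -- explicit forms of Ew and Hw slices
  have hEq1 : (fun s => Ew s x)
      = (fun s => Q s x ^ 2 / (2 * A s x)
          + g * (A s x * hw s x - I₁ s x) * Real.cos θ + g * A s x * Z x) := by
    funext s
    rw [hEw, hu]
    field_simp [(hApos s x).ne']
  have hEq2 : (fun y => Hw t y)
      = (fun y => Q t y ^ 3 / (2 * A t y ^ 2)
          + g * (Q t y * hw t y) * Real.cos θ + g * (Q t y * Z y)
          + Q t y * (M t y * (k * γ * (ρ₀ * M t y / (S y - A t y)) ^ (γ - 1))
              / (γ * (S y - A t y)))) := by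
    funext y
    rw [hHw, hEw, hu, hca2]
    field_simp [(hApos t y).ne', (hSA t y).ne', hγne]
    ring
  -- derivative of Ew slice
  have hE := (((hQ_t.fun_pow 2).fun_div (hA_t.const_mul 2)
      (by have := hApos t x; positivity)).fun_add
    ((hF.const_mul g).mul_const (Real.cos θ))).fun_add
      ((hA_t.const_mul g).mul_const (Z x))
  -- derivative of Hw slice
  have hH := ((((hQ_x.fun_pow 3).fun_div ((hA_x.fun_pow 2).const_mul 2)
      (by have := hApos t x; positivity)).fun_add
    (((hQ_x.fun_mul hhw_x).const_mul g).mul_const (Real.cos θ))).fun_add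
    ((hQ_x.fun_mul hZd).const_mul g)).fun_add (hQ_x.fun_mul hP_x)
  -- derivative of momentum flux slice
  have hFlux := (((hQ_x.fun_pow 2).fun_div hA_x ha).fun_add
    ((hI₁_x.const_mul g).mul_const (Real.cos θ))).fun_add (hA_x.fun_mul hP_x)
  -- rewrite the momentum equation
  have hm := hmom t x
  have hreplace : px (fun t x => Q t x ^ 2 / A t x + g * I₁ t x * Real.cos θ
          + A t x * (M t x * ca2 t x / (γ * (S x - A t x)))) t x
      = deriv (fun y => Q t y ^ 2 / A t y + g * I₁ t y * Real.cos θ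
          + A t y * (M t y * (k * γ * (ρ₀ * M t y / (S y - A t y)) ^ (γ - 1))
              / (γ * (S y - A t y)))) x := by
    show deriv (fun y => Q t y ^ 2 / A t y + g * I₁ t y * Real.cos θ
          + A t y * (M t y * ca2 t y / (γ * (S y - A t y)))) x = _
    congr 1
    funext y
    rw [hca2]
  rw [hreplace, hFlux.deriv, hca2] at hm
  -- solve for the space derivative of P
  have hPd : deriv (fun y => M t y * (k * γ * (ρ₀ * M t y / (S y - A t y)) ^ (γ - 1))
          / (γ * (S y - A t y))) x
      = (-g * A t x * deriv Z x + g * I₂ t x * Real.cos θ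
          + M t x * (k * γ * (ρ₀ * M t x / (S x - A t x)) ^ (γ - 1))
              / (γ * (S x - A t x)) * px A t x
          - pt Q t x
          - (2 * Q t x * px Q t x * A t x - Q t x ^ 2 * px A t x) / A t x ^ 2
          - g * px I₁ t x * Real.cos θ
          - px A t x * (M t x * (k * γ * (ρ₀ * M t x / (S x - A t x)) ^ (γ - 1))
              / (γ * (S x - A t x)))) / A t x := by
    rw [eq_div_iff ha]
    linear_combination hm
  -- rewrite the goal
  have e1 : pt Ew t x = deriv (fun s => Q s x ^ 2 / (2 * A s x)
          + g * (A s x * hw s x - I₁ s x) * Real.cos θ + g * A s x * Z x) t := by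
    show deriv (fun s => Ew s x) t = _
    rw [hEq1]
  have e2 : px Hw t x = deriv (fun y => Q t y ^ 3 / (2 * A t y ^ 2)
          + g * (Q t y * hw t y) * Real.cos θ + g * (Q t y * Z y)
          + Q t y * (M t y * (k * γ * (ρ₀ * M t y / (S y - A t y)) ^ (γ - 1))
              / (γ * (S y - A t y)))) x := by
    show deriv (fun y => Hw t y) x = _
    rw [hEq2]
  rw [hca2, e1, hE.deriv, e2, hH.deriv, hPd, hLeibnizX t x]
  have hqx : px Q t x = -pt A t x := by linarith [hmass t x]
  rw [hqx]
  field_simp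
  ring
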